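/- Let b ∈ (0, +∞] and let (H, φ) solve the EdGB FLRW system on [0, b) with the negative-branch initial data with parameter β. Then H(t)^2·exp(φ(t)) < β^2 for all t ∈ (0, b). -/

import Mathlib

open Set Filter Real

lemma keyAlg (E h p hp pdd : ℝ) (hE : 0 < E) (hh : 0 < h) (hp0 : p < 0)
    (c : 3 * h ^ 2 - 3 * E * p * h ^ 3 = p ^ 2 / 2)
    (sc : pdd = -3 * h * p - 3 * E * h ^ 2 * (h ^ 2 + hp))
    (dc : 6 * h * hp - 3 * (E * p * p * h ^ 3 + E * pdd * h ^ 3 + E * p * (3 * h ^ 2 * hp))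
        = p * pdd) :
    2 * h * hp + h ^ 2 * p < 0 ∧ -3 * h ^ 2 ≤ hp := by
  have hlin : hp * (2*h + 3*E^2*h^5 - 2*E*h^2*p)
      = -h*p^2 - 4*E*h^4*p + E*h^3*p^2 - 3*E^2*h^7 := by
    linear_combination (1/3) * dc + ((3*E*h^3 + p)/3) * sc
  have hEh : 0 < E * h := mul_pos hE hh
  have hd : 0 < 2 + 3*E^2*h^4 - 2*E*h*p := by nlinarith [mul_pos hEh (neg_pos.mpr hp0), sq_nonneg (E*h^2)]
  have hdh : 0 < (2 + 3*E^2*h^4 - 2*E*h*p) * h := mul_pos hd hh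
  have hkey : (2*h*hp + h^2*p) * ((2 + 3*E^2*h^4 - 2*E*h*p) * h)
      = h^2 * (2*h*p - 12*h^2 + 4*E*h^3*p + 3*E^2*h^5*p - 6*E^2*h^6) := by
    linear_combination 2*h*hlin + 4*h^2*c
  have hbneg : h^2 * (2*h*p - 12*h^2 + 4*E*h^3*p + 3*E^2*h^5*p - 6*E^2*h^6) < 0 := by
    have h2 : 0 < h^2 := pow_pos hh 2
    have t1 : h*p < 0 := mul_neg_of_pos_of_neg hh hp0
    have t2 : E*h^3*p < 0 := mul_neg_of_pos_of_neg (by positivity) hp0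
    have t3 : E^2*h^5*p < 0 := mul_neg_of_pos_of_neg (by positivity) hp0
    have t4 : (0:ℝ) < E^2*h^6 := by positivity
    have hbr : 2*h*p - 12*h^2 + 4*E*h^3*p + 3*E^2*h^5*p - 6*E^2*h^6 < 0 := by nlinarith
    exact mul_neg_of_pos_of_neg h2 hbr
  constructor
  · by_contra hcon
    push_neg at hcon
    nlinarith [mul_nonneg hcon hdh.le]
  · have hg : (hp + 3*h^2) * ((2 + 3*E^2*h^4 - 2*E*h*p) * h)
        = -4*E*p*h^4 + 6*E*h^5 - 6*E^2*p*h^6 + 6*E^2*h^7 := by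
      linear_combination hlin + (2*h - 2*E*h^3)*c
    have hgpos : 0 ≤ -4*E*p*h^4 + 6*E*h^5 - 6*E^2*p*h^6 + 6*E^2*h^7 := by
      have u1 : 0 < -4*E*p*h^4 := by
        have : E*p*h^4 < 0 := mul_neg_of_neg_of_pos (mul_neg_of_pos_of_neg hE hp0) (by positivity)
        nlinarith
      have u2 : (0:ℝ) < E*h^5 := by positivity
      have u3 : 0 < -6*E^2*p*h^6 := by
        have : E^2*p*h^6 < 0 := mul_neg_of_neg_of_pos (mul_neg_of_pos_of_neg (by positivity) hp0) (by positivity)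
        nlinarith
      have u4 : (0:ℝ) < E^2*h^7 := by positivity
      nlinarith
    by_contra hcon
    push_neg at hcon
    nlinarith [mul_neg_of_neg_of_pos (show hp + 3*h^2 < 0 by nlinarith) hdh]


/-- The EdGB FLRW system on a set `I ⊆ ℝ`: `H` is continuously differentiable and
`φ` twice continuously differentiable on `I`, and for every `t ∈ I` the Hamiltonian
constraint `3H² − 3e^φ φ' H³ = φ'²/2` and the scalar field equation
`φ'' = −3Hφ' − 3e^φ H²(H² + H')` hold. -/
def EdGB (H φ : ℝ → ℝ) (I : Set ℝ) : Prop :=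
  ContDiffOn ℝ 1 H I ∧ ContDiffOn ℝ 2 φ I ∧
  (∀ t ∈ I, 3 * H t ^ 2 - 3 * Real.exp (φ t) * deriv φ t * H t ^ 3 = (deriv φ t) ^ 2 / 2) ∧
  (∀ t ∈ I, deriv (deriv φ) t =
      -3 * H t * deriv φ t - 3 * Real.exp (φ t) * H t ^ 2 * (H t ^ 2 + deriv H t))

/-- The negative-branch initial data with parameter `β`:
`H(0) = β`, `φ(0) = 0`, `φ'(0) = −3β³ − √(9β⁶ + 6β²)`, with `0 < β < √6/6`. -/
def NegBranchData (H φ : ℝ → ℝ) (β : ℝ) : Prop :=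
  0 < β ∧ β < Real.sqrt 6 / 6 ∧ H 0 = β ∧ φ 0 = 0 ∧
  deriv φ 0 = -3 * β ^ 3 - Real.sqrt (9 * β ^ 6 + 6 * β ^ 2)

/-- If `(H, φ)` solves the EdGB FLRW system on `[0, b)` (with `b ∈ (0, +∞]`) with
the negative-branch initial data with parameter `β`, then
`H(t)²·e^{φ(t)} < β²` for all `t ∈ (0, b)`. -/
theorem stmt_11 (b : EReal) (hb : 0 < b) (β : ℝ) (H φ : ℝ → ℝ)
    (hsys : EdGB H φ {t : ℝ | 0 ≤ t ∧ (t : EReal) < b})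
    (hdata : NegBranchData H φ β) :
    ∀ t : ℝ, 0 < t → (t : EReal) < b →
      H t ^ 2 * Real.exp (φ t) < β ^ 2 := by
  obtain ⟨hβ, hβ6, hH0, hφ0, hφ'0⟩ := hdata
  obtain ⟨hHreg, hφreg, hcon, hscal⟩ := hsys
  intro t₀ ht₀ ht₀b
  -- pick a real right end `r`
  obtain ⟨r, hrt, hrb⟩ : ∃ r : ℝ, t₀ < r ∧ ∀ x : ℝ, x < r → (x : EReal) < b := by
    induction b with
    | bot => exact absurd hb (by simp)
    | coe c =>
        refine ⟨c, by exact_mod_cast ht₀b, fun x hx => by exact_mod_cast hx⟩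
    | top => exact ⟨t₀ + 1, by linarith, fun x _ => by exact (EReal.coe_lt_top x)⟩
  set I : Set ℝ := {t : ℝ | 0 ≤ t ∧ (t : EReal) < b} with hIdef
  have hUI : Ioo (0:ℝ) r ⊆ I := fun x hx => ⟨hx.1.le, hrb x hx.2⟩
  have hIccI : ∀ {m : ℝ}, m < r → Icc (0:ℝ) m ⊆ I :=
    fun {m} hm x hx => ⟨hx.1, hrb x (lt_of_le_of_lt hx.2 hm)⟩
  have hUopen : IsOpen (Ioo (0:ℝ) r) := isOpen_Ioo
  have hHU : ContDiffOn ℝ 1 H (Ioo 0 r) := hHreg.mono hUI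
  have hφU : ContDiffOn ℝ 2 φ (Ioo 0 r) := hφreg.mono hUI
  have hHdiff : ∀ s ∈ Ioo (0:ℝ) r, DifferentiableAt ℝ H s := fun s hs =>
    ((hHU.differentiableOn one_ne_zero).differentiableAt (hUopen.mem_nhds hs))
  have hφdiff : ∀ s ∈ Ioo (0:ℝ) r, DifferentiableAt ℝ φ s := fun s hs =>
    ((hφU.differentiableOn (by norm_num)).differentiableAt (hUopen.mem_nhds hs))
  have hφ'C : ContDiffOn ℝ 1 (deriv φ) (Ioo 0 r) :=
    hφU.deriv_of_isOpen hUopen (by norm_num)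
  have hφ'diff : ∀ s ∈ Ioo (0:ℝ) r, DifferentiableAt ℝ (deriv φ) s := fun s hs =>
    ((hφ'C.differentiableOn one_ne_zero).differentiableAt (hUopen.mem_nhds hs))
  have hφ'cont : ContinuousOn (deriv φ) (Ioo 0 r) := hφ'C.continuousOn
  have hHcont : ContinuousOn H (Icc 0 t₀) := hHreg.continuousOn.mono (hIccI hrt)
  -- zero of deriv φ forces zero of H
  have hzero : ∀ z ∈ I, deriv φ z = 0 → H z = 0 := by
    intro z hz h0
    have hc := hcon z hz
    rw [h0] at hc
    have : H z ^ 2 = 0 := by nlinarith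
    exact pow_eq_zero_iff (n := 2) (by norm_num) |>.mp this
  -- key pointwise derivative facts
  have keyAt : ∀ s ∈ Ioo (0:ℝ) r, 0 < H s → deriv φ s < 0 →
      deriv (fun t => H t ^ 2 * Real.exp (φ t)) s < 0 ∧ -3 * H s ^ 2 ≤ deriv H s := by
    intro s hs hh hp0
    have hH' : HasDerivAt H (deriv H s) s := (hHdiff s hs).hasDerivAt
    have hφ' : HasDerivAt φ (deriv φ s) s := (hφdiff s hs).hasDerivAt
    have hpdd : HasDerivAt (deriv φ) (deriv (deriv φ) s) s := (hφ'diff s hs).hasDerivAt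
    have hexp : HasDerivAt (fun t => Real.exp (φ t)) (Real.exp (φ s) * deriv φ s) s := hφ'.exp
    set E := Real.exp (φ s) with hE
    set h := H s
    set p := deriv φ s
    set h' := deriv H s
    set pdd := deriv (deriv φ) s
    have hL : HasDerivAt (fun t => 3 * H t ^ 2 - 3 * Real.exp (φ t) * deriv φ t * H t ^ 3)
        (3 * (2 * h ^ 1 * h') - (((3 * (E * p)) * p + (3 * E) * pdd) * h ^ 3
          + (3 * E * p) * (3 * h ^ 2 * h'))) s := by
      have c1 : HasDerivAt (fun t => 3 * Real.exp (φ t)) (3 * (E * p)) s := hexp.const_mul 3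
      have c2 : HasDerivAt (fun t => 3 * Real.exp (φ t) * deriv φ t)
          ((3 * (E * p)) * p + (3 * E) * pdd) s := c1.mul hpdd
      have c3 : HasDerivAt (fun t => 3 * Real.exp (φ t) * deriv φ t * H t ^ 3)
          (((3 * (E * p)) * p + (3 * E) * pdd) * h ^ 3 + (3 * E * p) * (3 * h ^ 2 * h')) s :=
        c2.mul (hH'.pow 3)
      exact ((hH'.pow 2).const_mul 3).sub c3
    have hR : HasDerivAt (fun t => (deriv φ t) ^ 2 / 2) ((2 * p ^ 1 * pdd) / 2) s :=
      (hpdd.pow 2).div_const 2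
    have hev : (fun t => 3 * H t ^ 2 - 3 * Real.exp (φ t) * deriv φ t * H t ^ 3)
        =ᶠ[nhds s] (fun t => (deriv φ t) ^ 2 / 2) := by
      filter_upwards [hUopen.mem_nhds hs] with x hx using hcon x (hUI hx)
    have heq := hev.deriv_eq
    rw [hL.deriv, hR.deriv] at heq
    have hsc := hscal s (hUI hs)
    have hc := hcon s (hUI hs)
    have hdc : 6 * h * h' - 3 * (E * p * p * h ^ 3 + E * pdd * h ^ 3 + E * p * (3 * h ^ 2 * h'))
        = p * pdd := by linear_combination heq
    obtain ⟨hX, hG⟩ := keyAlg E h p h' pdd (Real.exp_pos _) hh hp0 hc hsc hdc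
    refine ⟨?_, hG⟩
    have hF : HasDerivAt (fun t => H t ^ 2 * Real.exp (φ t))
        ((2 * h ^ 1 * h') * E + h ^ 2 * (E * p)) s := (hH'.pow 2).mul hexp
    rw [hF.deriv]
    nlinarith [mul_neg_of_neg_of_pos hX (Real.exp_pos (φ s))]
  -- deriv φ is negative wherever H has been positive
  have hpneg : ∀ x, 0 < x → x < r → (∀ y, 0 < y → y ≤ x → 0 < H y) → deriv φ x < 0 := by
    intro x hx0 hxr hHy
    have hp₀neg : deriv φ 0 < 0 := by
      rw [hφ'0]
      have hs : 0 < Real.sqrt (9 * β ^ 6 + 6 * β ^ 2) := Real.sqrt_pos.mpr (by positivity)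
      nlinarith [pow_pos hβ 3]
    have hdiff0 : DifferentiableAt ℝ φ 0 := by
      by_contra hnd
      rw [deriv_zero_of_not_differentiableAt hnd] at hp₀neg
      exact lt_irrefl 0 hp₀neg
    have hslope : Tendsto (slope φ 0) (nhdsWithin 0 {(0:ℝ)}ᶜ) (nhds (deriv φ 0)) :=
      hasDerivAt_iff_tendsto_slope.mp hdiff0.hasDerivAt
    have hslope' : Tendsto (slope φ 0) (nhdsWithin 0 (Ioi (0:ℝ))) (nhds (deriv φ 0)) :=
      hslope.mono_left (nhdsWithin_mono _ (fun y hy => ne_of_gt hy))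
    have hev : ∀ᶠ y in nhdsWithin 0 (Ioi (0:ℝ)), slope φ 0 y < 0 :=
      hslope'.eventually_lt_const hp₀neg
    have hmem : Ioo (0:ℝ) x ∈ nhdsWithin 0 (Ioi (0:ℝ)) := Ioo_mem_nhdsGT_of_mem ⟨le_rfl, hx0⟩
    obtain ⟨x₀, hx₀s, hx₀m⟩ := (hev.and (eventually_of_mem hmem (fun y hy => hy))).exists
    have hx₀r : x₀ < r := lt_trans hx₀m.2 hxr
    have hcontφ : ContinuousOn φ (Icc 0 x₀) :=
      hφreg.continuousOn.mono (hIccI hx₀r)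
    have hdiffI : ∀ y ∈ Ioo (0:ℝ) x₀, HasDerivAt φ (deriv φ y) y := fun y hy =>
      (hφdiff y ⟨hy.1, lt_trans hy.2 hx₀r⟩).hasDerivAt
    obtain ⟨ξ, hξmem, hξ⟩ := exists_hasDerivAt_eq_slope φ (deriv φ) hx₀m.1 hcontφ hdiffI
    have hξneg : deriv φ ξ < 0 := by
      rw [hξ]
      have : slope φ 0 x₀ = (φ x₀ - φ 0) / (x₀ - 0) := slope_def_field φ 0 x₀
      rw [this] at hx₀s
      simpa using hx₀s
    by_contra hge
    push_neg at hge
    have hξx : ξ < x := lt_trans hξmem.2 hx₀m.2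
    have hsub : Icc ξ x ⊆ Ioo (0:ℝ) r := fun y hy =>
      ⟨lt_of_lt_of_le hξmem.1 hy.1, lt_of_le_of_lt hy.2 hxr⟩
    obtain ⟨z, hzmem, hz0⟩ := intermediate_value_Icc hξx.le (hφ'cont.mono hsub) ⟨hξneg.le, hge⟩
    have hzI : z ∈ I := hUI (hsub hzmem)
    have hz' : H z = 0 := hzero z hzI hz0
    have : 0 < H z := hHy z (lt_of_lt_of_le hξmem.1 hzmem.1) hzmem.2
    linarith
  -- Gronwall-type lower bound
  have hGron : ∀ m, 0 < m → m < r → (∀ y, 0 ≤ y → y ≤ m → 0 < H y) →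
      (β⁻¹ + 3 * m)⁻¹ ≤ H m := by
    intro m hm0 hmr hHy
    have hpm : ∀ y, 0 < y → y ≤ m → deriv φ y < 0 := fun y hy0 hym =>
      hpneg y hy0 (lt_of_le_of_lt hym hmr) (fun z hz0 hzy => hHy z hz0.le (hzy.trans hym))
    set G : ℝ → ℝ := fun s => (H s)⁻¹ - 3 * s with hGdef
    have hGant : AntitoneOn G (Icc 0 m) := by
      have hIcc : Icc (0:ℝ) m ⊆ I := hIccI hmr
      apply antitoneOn_of_deriv_nonpos (convex_Icc 0 m)
      · exact ((hHreg.continuousOn.mono hIcc).inv₀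
          (fun y hy => (hHy y hy.1 hy.2).ne')).sub (continuousOn_const.mul continuousOn_id)
      · rw [interior_Icc]
        intro y hy
        have hyU : y ∈ Ioo (0:ℝ) r := ⟨hy.1, lt_trans hy.2 hmr⟩
        exact (((hHdiff y hyU).inv (hHy y hy.1.le hy.2.le).ne').sub
          ((differentiableAt_id.const_mul 3))).differentiableWithinAt
      · rw [interior_Icc]
        intro y hy
        have hyU : y ∈ Ioo (0:ℝ) r := ⟨hy.1, lt_trans hy.2 hmr⟩
        have hy0 : 0 < H y := hHy y hy.1.le hy.2.le
        obtain ⟨_, hG3⟩ := keyAt y hyU hy0 (hpm y hy.1 hy.2.le)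
        have hasG : HasDerivAt G (-(deriv H y) / (H y) ^ 2 - 3 * 1) y :=
          (((hHdiff y hyU).hasDerivAt).inv hy0.ne').sub ((hasDerivAt_id y).const_mul 3)
        rw [hasG.deriv]
        have h2 : 0 < (H y) ^ 2 := pow_pos hy0 2
        rw [mul_one, sub_nonpos, div_le_iff₀ h2]
        nlinarith
    have h0m : (0:ℝ) ∈ Icc (0:ℝ) m := ⟨le_rfl, hm0.le⟩
    have hmm : m ∈ Icc (0:ℝ) m := ⟨hm0.le, le_rfl⟩
    have := hGant h0m hmm hm0.le
    have hG0 : G 0 = β⁻¹ := by simp [hGdef, hH0]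
    have hGm : G m = (H m)⁻¹ - 3 * m := rfl
    rw [hG0, hGm] at this
    have hHm : 0 < H m := hHy m hm0.le le_rfl
    have hHminv : 0 < (H m)⁻¹ := inv_pos.mpr hHm
    have h1 : (H m)⁻¹ ≤ β⁻¹ + 3 * m := by linarith
    calc (β⁻¹ + 3 * m)⁻¹ ≤ ((H m)⁻¹)⁻¹ := by
          exact inv_anti₀ hHminv h1
      _ = H m := inv_inv _
  -- H is positive on [0, t₀]
  have hHpos : ∀ x ∈ Icc (0:ℝ) t₀, 0 < H x := by
    by_contra hcon'
    push_neg at hcon'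
    obtain ⟨x, hx, hHx⟩ := hcon'
    have hzex : ∃ z ∈ Icc (0:ℝ) t₀, H z = 0 := by
      have h0x : ContinuousOn H (Icc 0 x) := hHcont.mono (Icc_subset_Icc le_rfl hx.2)
      have himg := intermediate_value_Icc' hx.1 h0x
      have h0mem : (0:ℝ) ∈ Icc (H x) (H 0) := ⟨hHx, by rw [hH0]; exact hβ.le⟩
      obtain ⟨z, hz, hz0⟩ := himg h0mem
      exact ⟨z, Icc_subset_Icc le_rfl hx.2 hz, hz0⟩
    set Z : Set ℝ := Icc (0:ℝ) t₀ ∩ H ⁻¹' {0} with hZdef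
    have hZne : Z.Nonempty := by
      obtain ⟨z, hz, hz0⟩ := hzex
      exact ⟨z, hz, by simpa using hz0⟩
    have hZc : IsClosed Z := hHcont.preimage_isClosed_of_isClosed isClosed_Icc isClosed_singleton
    have hZbd : BddBelow Z := ⟨0, fun z hz => hz.1.1⟩
    set s₁ := sInf Z with hs₁def
    have hs₁Z : s₁ ∈ Z := hZc.csInf_mem hZne hZbd
    have hs₁0 : H s₁ = 0 := by simpa using hs₁Z.2
    have hs₁pos : 0 < s₁ := by
      rcases lt_or_eq_of_le hs₁Z.1.1 with h | h
      · exact h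
      · exfalso; rw [← h] at hs₁0; rw [hH0] at hs₁0; linarith
    have hs₁t : s₁ ≤ t₀ := hs₁Z.1.2
    have hposlt : ∀ x, 0 ≤ x → x < s₁ → 0 < H x := by
      intro y hy0 hys
      by_contra hle
      push_neg at hle
      have h0y : ContinuousOn H (Icc 0 y) :=
        hHcont.mono (Icc_subset_Icc le_rfl (le_trans hys.le hs₁t))
      have himg := intermediate_value_Icc' hy0 h0y
      obtain ⟨z, hz, hz0⟩ := himg ⟨hle, by rw [hH0]; exact hβ.le⟩
      have hzZ : z ∈ Z := ⟨⟨hz.1, le_trans hz.2 (le_trans hys.le hs₁t)⟩, by simpa using hz0⟩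
      have := csInf_le hZbd hzZ
      have : s₁ ≤ y := le_trans this hz.2
      linarith
    -- uniform lower bound on [0, s₁)
    have hcpos : 0 < (β⁻¹ + 3 * s₁)⁻¹ := by positivity
    have hbd : ∀ y, 0 ≤ y → y < s₁ → (β⁻¹ + 3 * s₁)⁻¹ ≤ H y := by
      intro y hy0 hys
      rcases eq_or_lt_of_le hy0 with h | h
      · rw [← h, hH0]
        have h1 : (β⁻¹ + 3 * s₁)⁻¹ ≤ (β⁻¹)⁻¹ := by
          apply inv_anti₀ (inv_pos.mpr hβ)
          nlinarith
        rw [inv_inv] at h1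
        exact h1
      · have hyr : y < r := lt_of_lt_of_le hys (le_trans hs₁t hrt.le)
        have := hGron y h hyr (fun z hz0 hzy => hposlt z hz0 (lt_of_le_of_lt hzy hys))
        refine le_trans ?_ this
        apply inv_anti₀ (by positivity)
        nlinarith
    -- contradiction by continuity at s₁
    have hcw : ContinuousWithinAt H (Ico 0 s₁) s₁ :=
      (hHcont s₁ ⟨hs₁pos.le, hs₁t⟩).mono (fun y hy => ⟨hy.1, le_trans hy.2.le hs₁t⟩)
    have hclos : s₁ ∈ closure (Ico (0:ℝ) s₁) := by
      rw [closure_Ico (ne_of_lt hs₁pos)]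
      exact ⟨hs₁pos.le, le_rfl⟩
    have hne : (nhdsWithin s₁ (Ico (0:ℝ) s₁)).NeBot :=
      mem_closure_iff_nhdsWithin_neBot.mp hclos
    have hfin : (β⁻¹ + 3 * s₁)⁻¹ ≤ H s₁ :=
      ge_of_tendsto hcw (eventually_of_mem self_mem_nhdsWithin (fun y hy => hbd y hy.1 hy.2))
    rw [hs₁0] at hfin
    linarith
  -- conclude: the energy is strictly decreasing
  have hpneg' : ∀ y, 0 < y → y ≤ t₀ → deriv φ y < 0 := fun y hy0 hyt =>
    hpneg y hy0 (lt_of_le_of_lt hyt hrt) (fun z hz0 hzy => hHpos z ⟨hz0.le, hzy.trans hyt⟩)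
  have hφcont : ContinuousOn φ (Icc 0 t₀) := hφreg.continuousOn.mono (hIccI hrt)
  have hFanti : StrictAntiOn (fun t => H t ^ 2 * Real.exp (φ t)) (Icc 0 t₀) := by
    apply strictAntiOn_of_deriv_neg (convex_Icc 0 t₀)
    · exact (hHcont.pow 2).mul (Real.continuous_exp.comp_continuousOn hφcont)
    · rw [interior_Icc]
      intro y hy
      exact (keyAt y ⟨hy.1, hy.2.trans hrt⟩ (hHpos y ⟨hy.1.le, hy.2.le⟩)
        (hpneg' y hy.1 hy.2.le)).1
  have hfin := hFanti ⟨le_rfl, ht₀.le⟩ ⟨ht₀.le, le_rfl⟩ ht₀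
  simpa [hH0, hφ0] using hfin
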